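/- For all nonnegative integers m, n and all real x, ∑_{k=0}^{m} S_{2,λ}(m,k) · (k)_{n,λ} · x^k = ∑_{k=0}^{n} ∑_{j=0}^{n−k} C(n,k) · C(n−k,j) · Bel_{m+k,λ}(x) · Bel_{n−k−j,λ}(−x) · (mλ)_{j,λ}. -/

import Mathlib

open Finset
open Polynomial

/-- Degenerate falling factorial `(y)_{r,λ}`. -/
noncomputable def degFall (lam x : ℝ) (n : ℕ) : ℝ := ∏ i ∈ Finset.range n, (x - i * lam)

/-- Ordinary falling factorial `(x)_k`. -/
noncomputable def fall (x : ℝ) (k : ℕ) : ℝ := ∏ i ∈ Finset.range k, (x - i)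

lemma fall_succ (x : ℝ) (k : ℕ) : fall x (k+1) = fall x k * (x - k) := by
  simp [fall, prod_range_succ]

lemma degFall_succ (lam x : ℝ) (n : ℕ) :
    degFall lam x (n+1) = degFall lam x n * (x - n * lam) := by
  simp [degFall, prod_range_succ]

lemma fall_nat_eq_zero {k j : ℕ} (h : k < j) : fall (k : ℝ) j = 0 := by
  apply Finset.prod_eq_zero (Finset.mem_range.2 h)
  simp

lemma fall_nat_pos (k : ℕ) : 0 < fall (k : ℝ) k := by
  apply Finset.prod_pos
  intro i hi
  have : i < k := Finset.mem_range.1 hi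
  have : (i : ℝ) < k := by exact_mod_cast this
  linarith

lemma fall_unique (N : ℕ) (c : ℕ → ℝ)
    (h : ∀ x : ℝ, ∑ k ∈ range N, c k * fall x k = 0) :
    ∀ k, k < N → c k = 0 := by
  intro k
  induction k using Nat.strong_induction_on with
  | _ k ih =>
    intro hk
    have h0 := h (k : ℝ)
    have hsum : ∑ j ∈ range N, c j * fall (k : ℝ) j = c k * fall (k : ℝ) k := by
      apply Finset.sum_eq_single_of_mem k (Finset.mem_range.2 hk)
      intro j hj hne
      rcases lt_or_gt_of_ne hne with hlt | hgt
      · rw [ih j hlt (lt_trans hlt hk)]; ring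
      · rw [fall_nat_eq_zero hgt]; ring
    rw [hsum] at h0
    have := (fall_nat_pos k).ne'
    exact (mul_eq_zero.1 h0).resolve_right this

noncomputable def sE (S2 : ℕ → ℕ → ℝ) (p i : ℕ) : ℝ := if i ≤ p then S2 p i else 0

section
variable (lam : ℝ) (S2 : ℕ → ℕ → ℝ)
variable (hS2 : ∀ (n : ℕ) (x : ℝ), degFall lam x n = ∑ k ∈ range (n + 1), S2 n k * fall x k)

include hS2 in
lemma sE_rec (p k : ℕ) :
    sE S2 (p+1) k = (if k = 0 then 0 else sE S2 p (k-1)) + ((k:ℝ) - p*lam) * sE S2 p k := by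
  set d : ℕ → ℝ := fun k =>
    (if k = 0 then 0 else S2 p (k-1)) + (if k ≤ p then ((k:ℝ) - p*lam) * S2 p k else 0) with hd
  have key : ∀ k, k < p + 2 → S2 (p+1) k = d k := by
    have h : ∀ x : ℝ, ∑ k ∈ range (p+2), (S2 (p+1) k - d k) * fall x k = 0 := by
      intro x
      have h1 := hS2 (p+1) x
      have h2 := hS2 p x
      have shift : ∑ k ∈ range (p+1), S2 p k * fall x (k+1)
          = ∑ k ∈ range (p+2), (if k = 0 then 0 else S2 p (k-1)) * fall x k := by
        rw [Finset.sum_range_succ' (fun k => (if k = 0 then 0 else S2 p (k-1)) * fall x k) (p+1)]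
        simp
      have ext : ∑ k ∈ range (p+1), ((k:ℝ) - p*lam) * S2 p k * fall x k
          = ∑ k ∈ range (p+2), (if k ≤ p then ((k:ℝ) - p*lam) * S2 p k else 0) * fall x k := by
        calc ∑ k ∈ range (p+1), ((k:ℝ) - p*lam) * S2 p k * fall x k
            = ∑ k ∈ range (p+1), (if k ≤ p then ((k:ℝ) - p*lam) * S2 p k else 0) * fall x k :=
              Finset.sum_congr rfl (fun k hk => by
                rw [if_pos (Nat.lt_succ_iff.1 (Finset.mem_range.1 hk))])
          _ = ∑ k ∈ range (p+2), (if k ≤ p then ((k:ℝ) - p*lam) * S2 p k else 0) * fall x k := by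
              apply Finset.sum_subset (Finset.range_subset_range.2 (by omega))
              intro k hk hnk
              simp only [Finset.mem_range] at hk hnk
              rw [if_neg (by omega), zero_mul]
      have e2 : (∑ k ∈ range (p+1), S2 p k * fall x k) * (x - p*lam)
          = ∑ k ∈ range (p+2), d k * fall x k := by
        rw [Finset.sum_mul]
        calc ∑ k ∈ range (p+1), S2 p k * fall x k * (x - p*lam)
            = ∑ k ∈ range (p+1), (S2 p k * fall x (k+1) + ((k:ℝ) - p*lam) * S2 p k * fall x k) :=
              Finset.sum_congr rfl (fun k _ => by rw [fall_succ]; ring)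
          _ = (∑ k ∈ range (p+1), S2 p k * fall x (k+1))
              + ∑ k ∈ range (p+1), ((k:ℝ) - p*lam) * S2 p k * fall x k := Finset.sum_add_distrib
          _ = (∑ k ∈ range (p+2), (if k = 0 then 0 else S2 p (k-1)) * fall x k)
              + ∑ k ∈ range (p+2), (if k ≤ p then ((k:ℝ) - p*lam) * S2 p k else 0) * fall x k := by
              rw [shift, ext]
          _ = ∑ k ∈ range (p+2), d k * fall x k := by
              rw [← Finset.sum_add_distrib]
              exact Finset.sum_congr rfl (fun k _ => by rw [hd]; ring)
      have heq : ∑ k ∈ range (p+2), S2 (p+1) k * fall x k = ∑ k ∈ range (p+2), d k * fall x k := by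
        rw [← h1, degFall_succ, h2, e2]
      calc ∑ k ∈ range (p+2), (S2 (p+1) k - d k) * fall x k
          = (∑ k ∈ range (p+2), S2 (p+1) k * fall x k) - ∑ k ∈ range (p+2), d k * fall x k := by
            rw [← Finset.sum_sub_distrib]
            exact Finset.sum_congr rfl (fun k _ => by ring)
        _ = 0 := by rw [heq]; ring
    intro k hk
    have := fall_unique (p+2) _ h k hk
    linarith
  by_cases hk1 : k ≤ p + 1
  · have hkey := key k (by omega)
    unfold sE
    rw [if_pos hk1, hkey, hd]
    beta_reduce
    by_cases h0 : k = 0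
    · subst h0
      simp only [if_pos rfl, if_pos (Nat.zero_le p)]
    · rw [if_neg h0, if_neg h0]
      rw [if_pos (show k - 1 ≤ p by omega)]
      by_cases hkp : k ≤ p
      · rw [if_pos hkp, if_pos hkp]
      · rw [if_neg hkp, if_neg hkp]
        ring
  · unfold sE
    rw [if_neg hk1]
    rw [if_neg (show ¬ k ≤ p by omega)]
    by_cases h0 : k = 0
    · omega
    · rw [if_neg h0, if_neg (show ¬ k - 1 ≤ p by omega)]
      ring

end

noncomputable def FF (S2 : ℕ → ℕ → ℝ) (ε : ℝ) (p : ℕ) : Polynomial ℝ :=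
  ∑ i ∈ range (p+1), Polynomial.C (sE S2 p i * ε^i) * Polynomial.X^i

lemma theta_term (a : ℝ) (i : ℕ) :
    Polynomial.X * Polynomial.derivative (Polynomial.C a * Polynomial.X^i : Polynomial ℝ)
      = Polynomial.C (a * i) * Polynomial.X^i := by
  rw [Polynomial.derivative_C_mul, Polynomial.derivative_X_pow]
  cases i with
  | zero => simp
  | succ i =>
    rw [Nat.add_sub_cancel, map_mul]
    push_cast
    ring

lemma theta_sum (N : ℕ) (c : ℕ → ℝ) :
    Polynomial.X * Polynomial.derivative (∑ i ∈ range N, Polynomial.C (c i) * Polynomial.X^i)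
      = ∑ i ∈ range N, Polynomial.C (c i * i) * Polynomial.X^i := by
  rw [map_sum, Finset.mul_sum]
  exact Finset.sum_congr rfl (fun i _ => theta_term (c i) i)

lemma FF_ext (S2 : ℕ → ℕ → ℝ) (ε : ℝ) (p N : ℕ) (h : p + 1 ≤ N) :
    FF S2 ε p = ∑ i ∈ range N, Polynomial.C (sE S2 p i * ε^i) * Polynomial.X^i := by
  apply Finset.sum_subset (Finset.range_subset_range.2 h)
  intro i hi hni
  simp only [Finset.mem_range] at hi hni
  have : ¬ i ≤ p := by omega
  rw [sE, if_neg this]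
  simp

section
variable (lam : ℝ) (S2 : ℕ → ℕ → ℝ)
variable (hS2 : ∀ (n : ℕ) (x : ℝ), degFall lam x n = ∑ k ∈ range (n + 1), S2 n k * fall x k)

include hS2 in
lemma theta_FF (ε : ℝ) (p : ℕ) :
    Polynomial.X * Polynomial.derivative (FF S2 ε p)
      = FF S2 ε (p+1) - Polynomial.C ε * Polynomial.X * FF S2 ε p
        + Polynomial.C ((p:ℝ)*lam) * FF S2 ε p := by
  rw [FF, theta_sum]
  have e1 : ∑ i ∈ range (p+1), Polynomial.C (sE S2 p i * ε^i * i) * Polynomial.X^i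
      = ∑ i ∈ range (p+2), Polynomial.C (sE S2 p i * ε^i * i) * Polynomial.X^i := by
    apply Finset.sum_subset (Finset.range_subset_range.2 (by omega))
    intro i hi hni
    simp only [Finset.mem_range] at hi hni
    rw [sE, if_neg (by omega)]
    simp
  have e2 : ∀ i ∈ range (p+2), Polynomial.C (sE S2 p i * ε^i * i) * Polynomial.X^i
      = Polynomial.C (sE S2 (p+1) i * ε^i) * Polynomial.X^i
        - Polynomial.C ((if i = 0 then 0 else sE S2 p (i-1)) * ε^i) * Polynomial.X^i
        + Polynomial.C ((p:ℝ)*lam * (sE S2 p i * ε^i)) * Polynomial.X^i := by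
    intro i _
    rw [← sub_mul, ← add_mul]
    congr 1
    rw [sE_rec lam S2 hS2 p i, ← map_sub, ← map_add]
    congr 1
    ring
  have A1 : (∑ i ∈ range (p+2), Polynomial.C (sE S2 (p+1) i * ε^i) * Polynomial.X^i)
      = FF S2 ε (p+1) := (FF_ext S2 ε (p+1) (p+2) (by omega)).symm
  have A2 : (∑ i ∈ range (p+2), Polynomial.C ((if i = 0 then 0 else sE S2 p (i-1)) * ε^i) * Polynomial.X^i)
      = Polynomial.C ε * Polynomial.X * FF S2 ε p := by
    rw [Finset.sum_range_succ' (fun i => Polynomial.C ((if i = 0 then 0 else sE S2 p (i-1)) * ε^i) * Polynomial.X^i) (p+1)]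
    have hz : Polynomial.C ((if (0:ℕ) = 0 then (0:ℝ) else sE S2 p (0-1)) * ε^0) * Polynomial.X^0 = 0 := by
      simp
    rw [hz, add_zero, FF, Finset.mul_sum]
    apply Finset.sum_congr rfl
    intro i _
    rw [if_neg (Nat.succ_ne_zero i)]
    simp only [Nat.add_sub_cancel]
    rw [pow_succ, pow_succ,
      show sE S2 p i * (ε^i*ε) = (sE S2 p i * ε^i) * ε from by ring, map_mul]
    ring
  have A3 : (∑ i ∈ range (p+2), Polynomial.C ((p:ℝ)*lam * (sE S2 p i * ε^i)) * Polynomial.X^i)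
      = Polynomial.C ((p:ℝ)*lam) * FF S2 ε p := by
    rw [FF_ext S2 ε p (p+2) (by omega), Finset.mul_sum]
    apply Finset.sum_congr rfl
    intro i _
    rw [map_mul]
    ring
  rw [e1, Finset.sum_congr rfl e2, Finset.sum_add_distrib, Finset.sum_sub_distrib, A1, A2, A3]
  rfl

end

noncomputable def wA (lam : ℝ) (m n k j : ℕ) : ℝ :=
  (n.choose k : ℝ) * ((n-k).choose j : ℝ) * degFall lam ((m:ℝ)*lam) j

noncomputable def wB (lam : ℝ) (m n k j : ℕ) : ℝ :=
  (n.choose k : ℝ) * ((n-k).choose j : ℝ) * degFall lam ((m:ℝ)*lam) (j+1)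

lemma chooseprod_zero {n k j : ℕ} (h : n < k + j) :
    (n.choose k : ℝ) * ((n-k).choose j : ℝ) = 0 := by
  rcases le_or_gt k n with hk | hk
  · have : n - k < j := by omega
    rw [Nat.choose_eq_zero_of_lt this]
    simp
  · rw [Nat.choose_eq_zero_of_lt hk]
    simp

lemma wA_eq_zero {lam : ℝ} {m n k j : ℕ} (h : n < k + j) : wA lam m n k j = 0 := by
  rw [wA, chooseprod_zero h, zero_mul]

lemma wB_eq_zero {lam : ℝ} {m n k j : ℕ} (h : n < k + j) : wB lam m n k j = 0 := by
  rw [wB, chooseprod_zero h, zero_mul]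

lemma choose_key_nat (n k j : ℕ) :
    (n+1).choose k * ((n+1-k).choose j)
      = (if k = 0 then 0 else n.choose (k-1) * ((n-(k-1)).choose j))
        + n.choose k * ((n-k).choose j)
        + (if j = 0 then 0 else n.choose k * ((n-k).choose (j-1))) := by
  cases k with
  | zero =>
    cases j with
    | zero => simp
    | succ j =>
      have h := Nat.choose_succ_succ n j
      norm_num
      simp only [Nat.succ_eq_add_one] at *
      omega
  | succ k =>
    rw [if_neg (Nat.succ_ne_zero k), Nat.add_sub_cancel, Nat.succ_sub_succ]
    rw [Nat.choose_succ_succ n k, Nat.add_mul]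
    -- goal: n.choose k * ((n-k).choose j) + n.choose (k+1) * ((n-k).choose j)
    --   = n.choose k * ((n-k).choose j) + n.choose (k+1) * ((n-(k+1)).choose j) + (if ...)
    rcases le_or_gt n k with hnk | hnk
    · -- n ≤ k : n.choose (k+1) = 0, and n - k = 0 = n - (k+1)
      rw [Nat.choose_eq_zero_of_lt (by omega : n < k+1)]
      cases j with
      | zero => simp
      | succ j => simp [Nat.choose_eq_zero_of_lt (show n - k < j + 1 by omega)]
    · -- k < n : n - k = (n - (k+1)) + 1
      have hs : n - k = (n - (k+1)) + 1 := by omega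
      cases j with
      | zero => simp
      | succ j =>
        rw [if_neg (Nat.succ_ne_zero j), Nat.add_sub_cancel]
        rw [hs, Nat.choose_succ_succ (n-(k+1)) j]
        ring

lemma wA_key (lam : ℝ) (m n k j : ℕ) :
    wA lam m (n+1) k j
      = (if k = 0 then 0 else (n.choose (k-1) : ℝ) * ((n-(k-1)).choose j : ℝ)
            * degFall lam ((m:ℝ)*lam) j)
        + wA lam m n k j
        + (if j = 0 then 0 else wB lam m n k (j-1)) := by
  have h := choose_key_nat n k j
  have hcast : ((n+1).choose k : ℝ) * (((n+1-k).choose j : ℕ) : ℝ)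
      = (if k = 0 then (0:ℝ) else (n.choose (k-1) : ℝ) * ((n-(k-1)).choose j : ℝ))
        + (n.choose k : ℝ) * ((n-k).choose j : ℝ)
        + (if j = 0 then (0:ℝ) else (n.choose k : ℝ) * ((n-k).choose (j-1) : ℝ)) := by
    split_ifs at h ⊢ <;> exact_mod_cast h
  rw [wA, wA, hcast]
  rw [add_mul, add_mul]
  congr 1
  · congr 1
    split_ifs with h1
    · simp
    · rfl
  · split_ifs with h2
    · simp
    · rw [wB]
      congr 2
      omega

noncomputable def PP (lam : ℝ) (S2 : ℕ → ℕ → ℝ) (m n : ℕ) : Polynomial ℝ :=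
  ∑ k ∈ range (m+1), Polynomial.C (S2 m k * degFall lam (k:ℝ) n) * Polynomial.X^k

noncomputable def GG (lam : ℝ) (S2 : ℕ → ℕ → ℝ) (m n : ℕ) : Polynomial ℝ :=
  ∑ k ∈ range (n+2), ∑ j ∈ range (n+2),
    Polynomial.C (wA lam m n k j) * (FF S2 1 (m+k) * FF S2 (-1) (n-k-j))

lemma rect_ext {M : Type*} [AddCommMonoid M] {f : ℕ → ℕ → M} {n N : ℕ} (h : n + 2 ≤ N)
    (h0 : ∀ k j, n < k + j → f k j = 0) :
    ∑ k ∈ range (n+2), ∑ j ∈ range (n+2), f k j = ∑ k ∈ range N, ∑ j ∈ range N, f k j := by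
  have inner : ∀ k, ∑ j ∈ range (n+2), f k j = ∑ j ∈ range N, f k j := by
    intro k
    apply Finset.sum_subset (Finset.range_subset_range.2 h)
    intro j hj hnj
    simp only [Finset.mem_range] at hnj
    exact h0 k j (by omega)
  rw [Finset.sum_congr rfl (fun k _ => inner k)]
  apply Finset.sum_subset (Finset.range_subset_range.2 h)
  intro k hk hnk
  apply Finset.sum_eq_zero
  intro j hj
  simp only [Finset.mem_range] at hnk
  exact h0 k j (by omega)

section
variable (lam : ℝ) (S2 : ℕ → ℕ → ℝ)
variable (hS2 : ∀ (n : ℕ) (x : ℝ), degFall lam x n = ∑ k ∈ range (n + 1), S2 n k * fall x k)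

include hS2 in
lemma S2_00 : S2 0 0 = 1 := by
  have h := hS2 0 0
  simp [degFall, fall] at h
  linarith

include hS2 in
lemma GG_term (m n k j : ℕ) :
    Polynomial.X * Polynomial.derivative
        (Polynomial.C (wA lam m n k j) * (FF S2 1 (m+k) * FF S2 (-1) (n-k-j)))
      - Polynomial.C ((n:ℝ)*lam)
          * (Polynomial.C (wA lam m n k j) * (FF S2 1 (m+k) * FF S2 (-1) (n-k-j)))
    = Polynomial.C (wA lam m n k j) * (FF S2 1 (m+k+1) * FF S2 (-1) (n-k-j))
      + Polynomial.C (wA lam m n k j) * (FF S2 1 (m+k) * FF S2 (-1) (n-k-j+1))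
      + Polynomial.C (wB lam m n k j) * (FF S2 1 (m+k) * FF S2 (-1) (n-k-j)) := by
  by_cases hkj : k + j ≤ n
  · have t1 := theta_FF lam S2 hS2 1 (m+k)
    have t2 := theta_FF lam S2 hS2 (-1) (n-k-j)
    have expand : Polynomial.X * Polynomial.derivative
        (Polynomial.C (wA lam m n k j) * (FF S2 1 (m+k) * FF S2 (-1) (n-k-j)))
        = Polynomial.C (wA lam m n k j)
            * ((Polynomial.X * Polynomial.derivative (FF S2 1 (m+k))) * FF S2 (-1) (n-k-j)
              + FF S2 1 (m+k) * (Polynomial.X * Polynomial.derivative (FF S2 (-1) (n-k-j)))) := by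
      rw [Polynomial.derivative_C_mul, Polynomial.derivative_mul]
      ring
    have hc : ((m+k : ℕ):ℝ)*lam + ((n-k-j : ℕ):ℝ)*lam - (n:ℝ)*lam = (m:ℝ)*lam - (j:ℝ)*lam := by
      have e : (n - k - j) + (k + j) = n := by omega
      have e2 : ((n - k - j : ℕ) : ℝ) + ((k:ℝ) + (j:ℝ)) = (n:ℝ) := by exact_mod_cast e
      have h3 : ((n - k - j : ℕ) : ℝ) = (n:ℝ) - k - j := by linarith
      rw [h3]
      push_cast
      ring
    have hwB : wB lam m n k j
        = wA lam m n k j * (((m+k : ℕ):ℝ)*lam + ((n-k-j : ℕ):ℝ)*lam - (n:ℝ)*lam) := by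
      rw [wB, wA, degFall_succ, hc]
      ring
    rw [expand, t1, t2, hwB]
    simp only [map_mul, map_add, map_sub, map_one, map_neg]
    ring
  · rw [wA_eq_zero (by omega), wB_eq_zero (by omega)]
    simp

include hS2 in
lemma GG_step (m n : ℕ) :
    Polynomial.X * Polynomial.derivative (GG lam S2 m n)
      - Polynomial.C ((n:ℝ)*lam) * GG lam S2 m n = GG lam S2 m (n+1) := by
  -- Left side as a double sum of per-term expressions
  have L : Polynomial.X * Polynomial.derivative (GG lam S2 m n)
      - Polynomial.C ((n:ℝ)*lam) * GG lam S2 m n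
      = ∑ k ∈ range (n+2), ∑ j ∈ range (n+2),
          (Polynomial.X * Polynomial.derivative
              (Polynomial.C (wA lam m n k j) * (FF S2 1 (m+k) * FF S2 (-1) (n-k-j)))
            - Polynomial.C ((n:ℝ)*lam)
                * (Polynomial.C (wA lam m n k j) * (FF S2 1 (m+k) * FF S2 (-1) (n-k-j)))) := by
    rw [GG]
    simp only [map_sum, Finset.mul_sum]
    rw [← Finset.sum_sub_distrib]
    exact Finset.sum_congr rfl (fun k _ => by rw [← Finset.sum_sub_distrib])
  rw [L, Finset.sum_congr rfl (fun k _ => Finset.sum_congr rfl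
    (fun j _ => GG_term lam S2 hS2 m n k j))]
  -- split into three double sums
  have split : ∑ k ∈ range (n+2), ∑ j ∈ range (n+2),
      (Polynomial.C (wA lam m n k j) * (FF S2 1 (m+k+1) * FF S2 (-1) (n-k-j))
        + Polynomial.C (wA lam m n k j) * (FF S2 1 (m+k) * FF S2 (-1) (n-k-j+1))
        + Polynomial.C (wB lam m n k j) * (FF S2 1 (m+k) * FF S2 (-1) (n-k-j)))
      = (∑ k ∈ range (n+2), ∑ j ∈ range (n+2),
          Polynomial.C (wA lam m n k j) * (FF S2 1 (m+k+1) * FF S2 (-1) (n-k-j)))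
        + (∑ k ∈ range (n+2), ∑ j ∈ range (n+2),
          Polynomial.C (wA lam m n k j) * (FF S2 1 (m+k) * FF S2 (-1) (n-k-j+1)))
        + (∑ k ∈ range (n+2), ∑ j ∈ range (n+2),
          Polynomial.C (wB lam m n k j) * (FF S2 1 (m+k) * FF S2 (-1) (n-k-j))) := by
    rw [← Finset.sum_add_distrib, ← Finset.sum_add_distrib]
    exact Finset.sum_congr rfl (fun k _ => by
      rw [← Finset.sum_add_distrib, ← Finset.sum_add_distrib])
  rw [split]
  -- decompose GG (n+1) using the Pascal-type identity for the coefficients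
  have R : GG lam S2 m (n+1)
      = (∑ k ∈ range (n+1+2), ∑ j ∈ range (n+1+2),
          Polynomial.C (if k = 0 then 0 else (n.choose (k-1) : ℝ) * ((n-(k-1)).choose j : ℝ)
              * degFall lam ((m:ℝ)*lam) j)
            * (FF S2 1 (m+k) * FF S2 (-1) (n+1-k-j)))
        + (∑ k ∈ range (n+1+2), ∑ j ∈ range (n+1+2),
          Polynomial.C (wA lam m n k j) * (FF S2 1 (m+k) * FF S2 (-1) (n+1-k-j)))
        + (∑ k ∈ range (n+1+2), ∑ j ∈ range (n+1+2),
          Polynomial.C (if j = 0 then 0 else wB lam m n k (j-1))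
            * (FF S2 1 (m+k) * FF S2 (-1) (n+1-k-j))) := by
    rw [GG]
    rw [← Finset.sum_add_distrib, ← Finset.sum_add_distrib]
    apply Finset.sum_congr rfl
    intro k _
    rw [← Finset.sum_add_distrib, ← Finset.sum_add_distrib]
    apply Finset.sum_congr rfl
    intro j _
    rw [wA_key]
    simp only [map_add]
    ring
  have E1 : (∑ k ∈ range (n+1+2), ∑ j ∈ range (n+1+2),
        Polynomial.C (if k = 0 then 0 else (n.choose (k-1) : ℝ) * ((n-(k-1)).choose j : ℝ)
            * degFall lam ((m:ℝ)*lam) j)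
          * (FF S2 1 (m+k) * FF S2 (-1) (n+1-k-j)))
      = ∑ k ∈ range (n+2), ∑ j ∈ range (n+2),
          Polynomial.C (wA lam m n k j) * (FF S2 1 (m+k+1) * FF S2 (-1) (n-k-j)) := by
    rw [Finset.sum_range_succ' (fun k => ∑ j ∈ range (n+1+2),
      Polynomial.C (if k = 0 then 0 else (n.choose (k-1) : ℝ) * ((n-(k-1)).choose j : ℝ)
          * degFall lam ((m:ℝ)*lam) j)
        * (FF S2 1 (m+k) * FF S2 (-1) (n+1-k-j))) (n+2)]
    have f0 : (∑ j ∈ range (n+1+2),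
        Polynomial.C (if (0:ℕ) = 0 then (0:ℝ) else (n.choose (0-1) : ℝ) * ((n-(0-1)).choose j : ℝ)
            * degFall lam ((m:ℝ)*lam) j)
          * (FF S2 1 (m+0) * FF S2 (-1) (n+1-0-j))) = 0 := by
      apply Finset.sum_eq_zero
      intro j _
      rw [if_pos rfl]
      simp
    rw [f0, add_zero]
    apply Finset.sum_congr rfl
    intro k hk
    have inner : ∀ j, Polynomial.C (if k+1 = 0 then 0 else (n.choose (k+1-1) : ℝ)
          * ((n-(k+1-1)).choose j : ℝ) * degFall lam ((m:ℝ)*lam) j)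
          * (FF S2 1 (m+(k+1)) * FF S2 (-1) (n+1-(k+1)-j))
        = Polynomial.C (wA lam m n k j) * (FF S2 1 (m+k+1) * FF S2 (-1) (n-k-j)) := by
      intro j
      rw [if_neg (Nat.succ_ne_zero k), show k+1-1 = k from rfl,
        show m+(k+1) = m+k+1 from by omega, show n+1-(k+1)-j = n-k-j from by omega, wA]
    rw [Finset.sum_congr rfl (fun j _ => inner j)]
    refine (Finset.sum_subset (Finset.range_subset_range.2 (by omega)) ?_).symm
    intro j hj hnj
    simp only [Finset.mem_range] at hnj
    rw [wA_eq_zero (show n < k + j by omega)]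
    simp
  have E2 : (∑ k ∈ range (n+1+2), ∑ j ∈ range (n+1+2),
        Polynomial.C (wA lam m n k j) * (FF S2 1 (m+k) * FF S2 (-1) (n+1-k-j)))
      = ∑ k ∈ range (n+2), ∑ j ∈ range (n+2),
          Polynomial.C (wA lam m n k j) * (FF S2 1 (m+k) * FF S2 (-1) (n-k-j+1)) := by
    have h0 : ∀ k j, n < k + j →
        Polynomial.C (wA lam m n k j) * (FF S2 1 (m+k) * FF S2 (-1) (n-k-j+1)) = 0 := by
      intro k j h
      rw [wA_eq_zero h]
      simp
    rw [rect_ext (show n+2 ≤ n+1+2 by omega) h0]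
    apply Finset.sum_congr rfl
    intro k _
    apply Finset.sum_congr rfl
    intro j _
    by_cases hkj : k + j ≤ n
    · rw [show n+1-k-j = n-k-j+1 from by omega]
    · rw [wA_eq_zero (by omega)]
      simp
  have E3 : (∑ k ∈ range (n+1+2), ∑ j ∈ range (n+1+2),
        Polynomial.C (if j = 0 then 0 else wB lam m n k (j-1))
          * (FF S2 1 (m+k) * FF S2 (-1) (n+1-k-j)))
      = ∑ k ∈ range (n+2), ∑ j ∈ range (n+2),
          Polynomial.C (wB lam m n k j) * (FF S2 1 (m+k) * FF S2 (-1) (n-k-j)) := by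
    have inner : ∀ k, (∑ j ∈ range (n+1+2),
        Polynomial.C (if j = 0 then 0 else wB lam m n k (j-1))
          * (FF S2 1 (m+k) * FF S2 (-1) (n+1-k-j)))
        = ∑ j ∈ range (n+2),
            Polynomial.C (wB lam m n k j) * (FF S2 1 (m+k) * FF S2 (-1) (n-k-j)) := by
      intro k
      rw [Finset.sum_range_succ' (fun j =>
        Polynomial.C (if j = 0 then 0 else wB lam m n k (j-1))
          * (FF S2 1 (m+k) * FF S2 (-1) (n+1-k-j))) (n+2)]
      have f0 : Polynomial.C (if (0:ℕ) = 0 then (0:ℝ) else wB lam m n k (0-1))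
          * (FF S2 1 (m+k) * FF S2 (-1) (n+1-k-0)) = 0 := by
        rw [if_pos rfl]
        simp
      rw [f0, add_zero]
      apply Finset.sum_congr rfl
      intro j hj
      rw [if_neg (Nat.succ_ne_zero j), show j+1-1 = j from rfl,
        show n+1-k-(j+1) = n-k-j from by omega]
    rw [Finset.sum_congr rfl (fun k _ => inner k)]
    refine (Finset.sum_subset (Finset.range_subset_range.2 (by omega)) ?_).symm
    intro k hk hnk
    apply Finset.sum_eq_zero
    intro j _
    simp only [Finset.mem_range] at hnk
    rw [wB_eq_zero (show n < k + j by omega)]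
    simp
  rw [R, E1, E2, E3]

end

section
variable (lam : ℝ) (S2 : ℕ → ℕ → ℝ)
variable (hS2 : ∀ (n : ℕ) (x : ℝ), degFall lam x n = ∑ k ∈ range (n + 1), S2 n k * fall x k)

include hS2 in
lemma main_poly (m : ℕ) : ∀ n, PP lam S2 m n = GG lam S2 m n := by
  intro n
  induction n with
  | zero =>
    have hFm0 : FF S2 (-1) 0 = 1 := by
      rw [FF]
      simp [sE, S2_00 lam S2 hS2]
    have hGG : GG lam S2 m 0 = FF S2 1 m := by
      rw [GG]
      rw [Finset.sum_range_succ, Finset.sum_range_one, Finset.sum_range_succ,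
        Finset.sum_range_one, Finset.sum_range_succ, Finset.sum_range_one]
      have w00 : wA lam m 0 0 0 = 1 := by simp [wA, degFall]
      have w01 : wA lam m 0 0 1 = 0 := by simp [wA]
      have w10 : wA lam m 0 1 0 = 0 := by simp [wA]
      have w11 : wA lam m 0 1 1 = 0 := by simp [wA]
      rw [w00, w01, w10, w11]
      simp [hFm0]
    rw [hGG, PP, FF]
    apply Finset.sum_congr rfl
    intro k hk
    rw [sE, if_pos (Nat.lt_succ_iff.1 (Finset.mem_range.1 hk))]
    simp [degFall]
  | succ n ih =>
    have stepP : PP lam S2 m (n+1)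
        = Polynomial.X * Polynomial.derivative (PP lam S2 m n)
          - Polynomial.C ((n:ℝ)*lam) * PP lam S2 m n := by
      simp only [PP]
      rw [theta_sum (m+1) (fun k => S2 m k * degFall lam (k:ℝ) n)]
      rw [Finset.mul_sum, ← Finset.sum_sub_distrib]
      apply Finset.sum_congr rfl
      intro k _
      have hre : Polynomial.C ((n:ℝ)*lam) * (Polynomial.C (S2 m k * degFall lam (k:ℝ) n) * Polynomial.X^k)
          = Polynomial.C ((n:ℝ)*lam * (S2 m k * degFall lam (k:ℝ) n)) * Polynomial.X^k := by
        simp only [map_mul]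
        ring
      rw [degFall_succ, hre, ← sub_mul, ← map_sub]
      congr 1
      ring
    rw [stepP, ih, GG_step lam S2 hS2 m n]

omit hS2 in
lemma eval_FF' (ε x : ℝ) (p : ℕ) :
    Polynomial.eval x (FF S2 ε p) = ∑ i ∈ range (p+1), S2 p i * (ε*x)^i := by
  rw [FF, Polynomial.eval_finset_sum]
  apply Finset.sum_congr rfl
  intro i hi
  rw [sE, if_pos (Nat.lt_succ_iff.1 (Finset.mem_range.1 hi))]
  simp [mul_pow]
  ring

end


/-- with `Bel_{n,λ}(x) = ∑_{k=0}^n S_{2,λ}(n,k) x^k`,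
`∑_{k=0}^m S_{2,λ}(m,k) (k)_{n,λ} x^k
  = ∑_{k=0}^n ∑_{j=0}^{n−k} C(n,k) C(n−k,j) Bel_{m+k,λ}(x) Bel_{n−k−j,λ}(−x) (mλ)_{j,λ}`. -/
theorem degenerate_bell_product_identity (lam : ℝ) (S2 : ℕ → ℕ → ℝ)
    (hS2 : ∀ (n : ℕ) (x : ℝ), degFall lam x n = ∑ k ∈ range (n + 1), S2 n k * fall x k)
    (m n : ℕ) (x : ℝ) :
    ∑ k ∈ range (m + 1), S2 m k * degFall lam (k : ℝ) n * x ^ k =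
      ∑ k ∈ range (n + 1), ∑ j ∈ range (n - k + 1),
        (n.choose k : ℝ) * ((n - k).choose j : ℝ) *
          (∑ i ∈ range (m + k + 1), S2 (m + k) i * x ^ i) *
          (∑ i ∈ range (n - k - j + 1), S2 (n - k - j) i * (-x) ^ i) *
          degFall lam ((m : ℝ) * lam) j := by
  have key := congrArg (Polynomial.eval x) (main_poly lam S2 hS2 m n)
  have hL : Polynomial.eval x (PP lam S2 m n)
      = ∑ k ∈ range (m+1), S2 m k * degFall lam (k:ℝ) n * x^k := by
    rw [PP, Polynomial.eval_finset_sum]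
    simp
  have hR : Polynomial.eval x (GG lam S2 m n)
      = ∑ k ∈ range (n+2), ∑ j ∈ range (n+2),
          (n.choose k : ℝ) * ((n-k).choose j : ℝ)
            * (∑ i ∈ range (m+k+1), S2 (m+k) i * x^i)
            * (∑ i ∈ range (n-k-j+1), S2 (n-k-j) i * (-x)^i)
            * degFall lam ((m:ℝ)*lam) j := by
    rw [GG, Polynomial.eval_finset_sum]
    apply Finset.sum_congr rfl
    intro k _
    rw [Polynomial.eval_finset_sum]
    apply Finset.sum_congr rfl
    intro j _
    rw [Polynomial.eval_mul, Polynomial.eval_C, Polynomial.eval_mul,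
      eval_FF' S2 1 x (m+k), eval_FF' S2 (-1) x (n-k-j), wA]
    simp only [one_mul, neg_one_mul]
    ring
  have ext : (∑ k ∈ range (n + 1), ∑ j ∈ range (n - k + 1),
        (n.choose k : ℝ) * ((n - k).choose j : ℝ) *
          (∑ i ∈ range (m + k + 1), S2 (m + k) i * x ^ i) *
          (∑ i ∈ range (n - k - j + 1), S2 (n - k - j) i * (-x) ^ i) *
          degFall lam ((m : ℝ) * lam) j)
      = ∑ k ∈ range (n+2), ∑ j ∈ range (n+2),
          (n.choose k : ℝ) * ((n-k).choose j : ℝ)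
            * (∑ i ∈ range (m+k+1), S2 (m+k) i * x^i)
            * (∑ i ∈ range (n-k-j+1), S2 (n-k-j) i * (-x)^i)
            * degFall lam ((m:ℝ)*lam) j := by
    have inner : ∀ k, k ≤ n → (∑ j ∈ range (n-k+1),
          (n.choose k : ℝ) * ((n-k).choose j : ℝ)
            * (∑ i ∈ range (m+k+1), S2 (m+k) i * x^i)
            * (∑ i ∈ range (n-k-j+1), S2 (n-k-j) i * (-x)^i)
            * degFall lam ((m:ℝ)*lam) j)
        = ∑ j ∈ range (n+2),
            (n.choose k : ℝ) * ((n-k).choose j : ℝ)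
              * (∑ i ∈ range (m+k+1), S2 (m+k) i * x^i)
              * (∑ i ∈ range (n-k-j+1), S2 (n-k-j) i * (-x)^i)
              * degFall lam ((m:ℝ)*lam) j := by
      intro k hkn
      apply Finset.sum_subset (Finset.range_subset_range.2 (by omega))
      intro j hj hnj
      simp only [Finset.mem_range] at hnj
      have : (((n-k).choose j : ℕ) : ℝ) = 0 := by
        rw [Nat.choose_eq_zero_of_lt (by omega)]
        simp
      rw [this]
      ring
    rw [Finset.sum_congr rfl (fun k hk => inner k (Nat.lt_succ_iff.1 (Finset.mem_range.1 hk)))]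
    apply Finset.sum_subset (Finset.range_subset_range.2 (by omega))
    intro k hk hnk
    apply Finset.sum_eq_zero
    intro j _
    simp only [Finset.mem_range] at hnk
    have : ((n.choose k : ℕ) : ℝ) = 0 := by
      rw [Nat.choose_eq_zero_of_lt (by omega)]
      simp
    rw [this]
    ring
  rw [← hL, key, hR, ← ext]
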